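/- Let A ∈ F^{m×m}, B ∈ F^{m×r}, C ∈ F^{q×m} over an infinite field F. Then the maximum over all K ∈ F^{r×q} of rank(A + B K C) equals min{ rank [A B], rank [A; C] }, where [A B] is the column-augmented matrix and [A; C] is the row-augmented matrix. -/

import Mathlib

open Matrix Module Submodule

section Aux

variable {F : Type*} [Field F] {m : ℕ}

/-- The dot product bilinear form. -/
noncomputable def dotB (F : Type*) [Field F] (m : ℕ) :
    LinearMap.BilinForm F (Fin m → F) := Matrix.toBilin' 1

lemma dotB_apply (x y : Fin m → F) : dotB F m x y = x ⬝ᵥ y := by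
  rw [dotB, Matrix.toBilin'_apply', Matrix.one_mulVec]

lemma dotB_nondeg : (dotB F m).Nondegenerate := by
  refine ⟨fun v hv => ?_, fun v hv => ?_⟩ <;> funext i
  · have := hv (Pi.single i 1)
    rwa [dotB_apply, dotProduct_single, mul_one] at this
  · have := hv (Pi.single i 1)
    rwa [dotB_apply, single_dotProduct, one_mul] at this

lemma dotB_refl : (dotB F m).IsRefl := by
  intro x y h
  rw [dotB_apply] at h ⊢
  rwa [dotProduct_comm]

/-- If `c` is not in the row space of `M`, there is a kernel vector of `M` not orthogonal
to `c`. -/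
lemma exists_ker_dot (M : Matrix (Fin m) (Fin m) F) (c : Fin m → F)
    (hc : c ∉ LinearMap.range Mᵀ.mulVecLin) :
    ∃ x, M *ᵥ x = 0 ∧ c ⬝ᵥ x ≠ 0 := by
  by_contra h
  push_neg at h
  apply hc
  have hsub : LinearMap.range Mᵀ.mulVecLin ≤
      (dotB F m).orthogonal (LinearMap.ker M.mulVecLin) := by
    rintro _ ⟨v, rfl⟩
    intro x hx
    rw [LinearMap.mem_ker, Matrix.mulVecLin_apply] at hx
    show dotB F m x (Mᵀ.mulVecLin v) = 0
    rw [dotB_apply, Matrix.mulVecLin_apply]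
    calc x ⬝ᵥ Mᵀ *ᵥ v = (M *ᵥ x) ⬝ᵥ v := by
          simp [dotProduct, Matrix.mulVec, dotProduct, Finset.mul_sum, Finset.sum_mul]
          rw [Finset.sum_comm]
          exact Finset.sum_congr rfl fun i _ => Finset.sum_congr rfl fun j _ => by ring
      _ = 0 := by rw [hx, zero_dotProduct]
  have heq : LinearMap.range Mᵀ.mulVecLin =
      (dotB F m).orthogonal (LinearMap.ker M.mulVecLin) := by
    apply Submodule.eq_of_le_of_finrank_le hsub
    have h1 := (dotB F m).finrank_orthogonal dotB_nondeg
      (LinearMap.ker M.mulVecLin)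
    have h2 := LinearMap.finrank_range_add_finrank_ker M.mulVecLin
    have h3 : Mᵀ.rank = M.rank := Matrix.rank_transpose M
    rw [Matrix.rank, Matrix.rank] at h3
    rw [Module.finrank_pi, Fintype.card_fin] at h2
    rw [h1, Module.finrank_pi, Fintype.card_fin]
    omega
  rw [heq]
  intro x hx
  rw [LinearMap.mem_ker, Matrix.mulVecLin_apply] at hx
  show dotB F m x c = 0
  rw [dotB_apply, dotProduct_comm]
  exact h x hx

/-- Adding an outer product `b * cᵀ` where `b` is outside the column space and `c` pairs
nontrivially with the kernel strictly increases the rank. -/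
lemma rank_lt_rank_add_vecMulVec (M : Matrix (Fin m) (Fin m) F) (b c : Fin m → F)
    (hb : b ∉ LinearMap.range M.mulVecLin)
    (hx : ∃ x, M *ᵥ x = 0 ∧ c ⬝ᵥ x ≠ 0) :
    M.rank < (M + vecMulVec b c).rank := by
  obtain ⟨x, hx0, hcx⟩ := hx
  have hvm : ∀ y, (M + vecMulVec b c) *ᵥ y = M *ᵥ y + (c ⬝ᵥ y) • b := by
    intro y
    funext i
    simp only [Matrix.add_mulVec, Pi.add_apply, Pi.smul_apply, smul_eq_mul]
    congr 1
    simp only [Matrix.mulVec, dotProduct, vecMulVec_apply, Finset.sum_mul]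
    exact Finset.sum_congr rfl fun j _ => by ring
  have hbmem : b ∈ LinearMap.range (M + vecMulVec b c).mulVecLin := by
    refine ⟨(c ⬝ᵥ x)⁻¹ • x, ?_⟩
    rw [Matrix.mulVecLin_apply, Matrix.mulVec_smul, hvm, hx0, zero_add, smul_smul,
      inv_mul_cancel₀ hcx, one_smul]
  have hle : LinearMap.range M.mulVecLin ≤ LinearMap.range (M + vecMulVec b c).mulVecLin := by
    rintro _ ⟨z, rfl⟩
    have hz : M.mulVecLin z = (M + vecMulVec b c).mulVecLin z - (c ⬝ᵥ z) • b := by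
      rw [Matrix.mulVecLin_apply, Matrix.mulVecLin_apply, hvm, add_sub_cancel_right]
    rw [hz]
    exact Submodule.sub_mem _ (LinearMap.mem_range_self _ z) (Submodule.smul_mem _ _ hbmem)
  have hlt : LinearMap.range M.mulVecLin < LinearMap.range (M + vecMulVec b c).mulVecLin :=
    lt_of_le_of_ne hle (fun hEq => hb (hEq ▸ hbmem))
  exact Submodule.finrank_lt_finrank_of_lt hlt

/-- If `rank M < rank [X Y]` and `M = X + Y Z`, there is a column combination of `Y`
outside the column space of `M`. -/
lemma exists_not_mem_col {s : ℕ} (X : Matrix (Fin m) (Fin m) F) (Y : Matrix (Fin m) (Fin s) F)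
    (M : Matrix (Fin m) (Fin m) F) (Z : Matrix (Fin s) (Fin m) F) (hM : M = X + Y * Z)
    (h : M.rank < (fromCols X Y).rank) :
    ∃ u : Fin s → F, Y *ᵥ u ∉ LinearMap.range M.mulVecLin := by
  by_contra hY
  push_neg at hY
  have hYle : LinearMap.range Y.mulVecLin ≤ LinearMap.range M.mulVecLin := by
    rintro _ ⟨u, rfl⟩
    rw [Matrix.mulVecLin_apply]
    exact hY u
  have hXle : LinearMap.range X.mulVecLin ≤ LinearMap.range M.mulVecLin := by
    rintro _ ⟨w, rfl⟩
    have : X.mulVecLin w = M *ᵥ w - Y *ᵥ (Z *ᵥ w) := by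
      rw [Matrix.mulVecLin_apply, hM, Matrix.add_mulVec, Matrix.mulVec_mulVec,
        add_sub_cancel_right]
    rw [this]
    exact Submodule.sub_mem _ ⟨w, rfl⟩ (hYle ⟨Z *ᵥ w, rfl⟩)
  have hall : LinearMap.range (fromCols X Y).mulVecLin ≤ LinearMap.range M.mulVecLin := by
    rintro _ ⟨w, rfl⟩
    rw [Matrix.mulVecLin_apply, ← Sum.elim_comp_inl_inr w, fromCols_mulVec_sumElim]
    exact Submodule.add_mem _ (hXle ⟨_, rfl⟩) (hYle ⟨_, rfl⟩)
  have := Submodule.finrank_mono hall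
  rw [← Matrix.rank, ← Matrix.rank] at this
  omega

lemma mul_vecMulVec {r : ℕ} (B : Matrix (Fin m) (Fin r) F) (u : Fin r → F) (v : Fin q → F) :
    B * vecMulVec u v = vecMulVec (B *ᵥ u) v := by
  ext i l
  simp only [Matrix.mul_apply, vecMulVec_apply, Matrix.mulVec, dotProduct, Finset.sum_mul]
  exact Finset.sum_congr rfl fun k _ => by ring

lemma vecMulVec_mul {q : ℕ} (b : Fin m → F) (v : Fin q → F) (C : Matrix (Fin q) (Fin m) F) :
    vecMulVec b v * C = vecMulVec b (Cᵀ *ᵥ v) := by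
  ext i j
  simp only [Matrix.mul_apply, vecMulVec_apply, Matrix.mulVec, dotProduct,
    Matrix.transpose_apply, Finset.mul_sum]
  exact Finset.sum_congr rfl fun l _ => by ring

lemma mul_vecMulVec_mul {r q : ℕ} (B : Matrix (Fin m) (Fin r) F) (C : Matrix (Fin q) (Fin m) F)
    (u : Fin r → F) (v : Fin q → F) :
    B * vecMulVec u v * C = vecMulVec (B *ᵥ u) (Cᵀ *ᵥ v) := by
  rw [_root_.mul_vecMulVec, _root_.vecMulVec_mul]

end Aux

section Main

variable {F : Type*} [Field F] {m r q : ℕ}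
variable (A : Matrix (Fin m) (Fin m) F) (B : Matrix (Fin m) (Fin r) F)
    (C : Matrix (Fin q) (Fin m) F)

lemma rank_upper (K : Matrix (Fin r) (Fin q) F) :
    (A + B * K * C).rank ≤ min (fromCols A B).rank (fromRows A C).rank := by
  refine le_min ?_ ?_
  · have h1 : A + B * K * C = fromCols A B * fromBlocks (1 : Matrix (Fin m) (Fin m) F) 0 0 K * fromRows (1 : Matrix (Fin m) (Fin m) F) C := by
      rw [fromCols_mul_fromBlocks, fromCols_mul_fromRows]
      simp [Matrix.mul_assoc]
    rw [h1]
    exact le_trans (Matrix.rank_mul_le_left _ _) (Matrix.rank_mul_le_left _ _)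
  · have h2 : A + B * K * C = fromCols (1 : Matrix (Fin m) (Fin m) F) (B * K) * fromRows A C := by
      rw [fromCols_mul_fromRows, Matrix.one_mul, Matrix.mul_assoc]
    rw [h2]
    exact Matrix.rank_mul_le_right _ _

lemma rank_step (K : Matrix (Fin r) (Fin q) F)
    (h : (A + B * K * C).rank < min (fromCols A B).rank (fromRows A C).rank) :
    ∃ K' : Matrix (Fin r) (Fin q) F, (A + B * K * C).rank < (A + B * K' * C).rank := by
  set M := A + B * K * C with hMdef
  have h1 : M.rank < (fromCols A B).rank := lt_of_lt_of_le h (min_le_left _ _)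
  obtain ⟨u, hu⟩ := exists_not_mem_col A B M (K * C) (by rw [hMdef, Matrix.mul_assoc]) h1
  have hMT : Mᵀ = Aᵀ + Cᵀ * (Kᵀ * Bᵀ) := by
    rw [hMdef, Matrix.transpose_add, Matrix.transpose_mul, Matrix.transpose_mul]
  have h2 : Mᵀ.rank < (fromCols Aᵀ Cᵀ).rank := by
    rw [Matrix.rank_transpose, ← Matrix.transpose_fromRows, Matrix.rank_transpose]
    exact lt_of_lt_of_le h (min_le_right _ _)
  obtain ⟨v, hv⟩ := exists_not_mem_col Aᵀ Cᵀ Mᵀ (Kᵀ * Bᵀ) hMT h2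
  obtain ⟨x, hx0, hcx⟩ := exists_ker_dot M (Cᵀ *ᵥ v) hv
  refine ⟨K + vecMulVec u v, ?_⟩
  have key : A + B * (K + vecMulVec u v) * C = M + vecMulVec (B *ᵥ u) (Cᵀ *ᵥ v) := by
    rw [hMdef, Matrix.mul_add, Matrix.add_mul, ← mul_vecMulVec_mul B C u v]
    abel
  rw [key]
  exact rank_lt_rank_add_vecMulVec M _ _ hu ⟨x, hx0, hcx⟩

lemma rank_reach : ∀ j, j ≤ min (fromCols A B).rank (fromRows A C).rank →
    ∃ K : Matrix (Fin r) (Fin q) F, j ≤ (A + B * K * C).rank := by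
  intro j
  induction j with
  | zero => exact fun _ => ⟨0, Nat.zero_le _⟩
  | succ n ih =>
    intro hn
    obtain ⟨K, hK⟩ := ih (Nat.le_of_succ_le hn)
    rcases Nat.lt_or_ge (A + B * K * C).rank (n + 1) with hlt | hge
    · have heq : (A + B * K * C).rank = n := le_antisymm (Nat.lt_succ_iff.mp hlt) hK
      obtain ⟨K', hK'⟩ := rank_step A B C K (by omega)
      exact ⟨K', by omega⟩
    · exact ⟨K, hge⟩

end Main

theorem stmt_2 {F : Type*} [Field F] [Infinite F] {m r q : ℕ}
    (A : Matrix (Fin m) (Fin m) F) (B : Matrix (Fin m) (Fin r) F)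
    (C : Matrix (Fin q) (Fin m) F) :
    IsGreatest {n : ℕ | ∃ K : Matrix (Fin r) (Fin q) F, (A + B * K * C).rank = n}
      (min (fromCols A B).rank (fromRows A C).rank) := by
  constructor
  · obtain ⟨K, hK⟩ := rank_reach A B C (min (fromCols A B).rank (fromRows A C).rank) le_rfl
    exact ⟨K, le_antisymm (rank_upper A B C K) hK⟩
  · rintro n ⟨K, rfl⟩
    exact rank_upper A B C K
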